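/- There exists a constant c > 0 such that for all integers n ≥ 2, k ≤ n and r with 1 ≤ r ≤ c·k²/(n·log n), with probability at least 0.99 over H drawn from B(k, n−k, 1/2), every biclique (L, R) of H with |L| + |R| = k satisfies |L|^{4r} · |R| ≤ (1000r)^{10r} · n · (n/k)⁴. -/

import Mathlib

open MeasureTheory

/-- The random bipartite graph model `B(k, m, p)`: left vertex set `Fin k`, right vertex
set `Fin m`, each of the `k·m` edges present independently with probability `p`
(`true` means present). -/
noncomputable def bipartiteER (k m : ℕ) (p : ENNReal) (hp : p ≤ 1) :
    Measure (Fin k × Fin m → Bool) :=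
  Measure.pi fun _ : Fin k × Fin m => (PMF.bernoulli p.toNNReal
    (by simpa using ENNReal.toNNReal_mono ENNReal.one_ne_top hp)).toMeasure

/-- `(L, R)` is a biclique of the bipartite graph `H`. -/
def IsBiclique {k m : ℕ} (H : Fin k × Fin m → Bool) (L : Finset (Fin k))
    (R : Finset (Fin m)) : Prop :=
  ∀ u ∈ L, ∀ v ∈ R, H (u, v) = true

section Aux

open Real


lemma pow_self_le_three_pow_mul_factorial (b : ℕ) :
    ((b : ℝ)) ^ b ≤ 3 ^ b * (Nat.factorial b : ℝ) := by
  have h1 : ((b : ℝ)) ^ b / (Nat.factorial b : ℝ) ≤ Real.exp b :=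
    Real.pow_div_factorial_le_exp (x := (b : ℝ)) (by positivity) b
  have h2 : Real.exp (b : ℝ) ≤ 3 ^ b := by
    rw [← Real.exp_one_pow]
    exact pow_le_pow_left₀ (Real.exp_pos 1).le
      (Real.exp_one_lt_d9.le.trans (by norm_num)) b
  have hfac : (0 : ℝ) < (Nat.factorial b : ℝ) := by
    exact_mod_cast Nat.factorial_pos b
  calc ((b:ℝ))^b = ((b:ℝ))^b / (Nat.factorial b : ℝ) * (Nat.factorial b : ℝ) := by
        field_simp
    _ ≤ Real.exp b * (Nat.factorial b : ℝ) := mul_le_mul_of_nonneg_right h1 hfac.le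
    _ ≤ 3 ^ b * (Nat.factorial b : ℝ) := mul_le_mul_of_nonneg_right h2 hfac.le

lemma choose_le_aux {n m b : ℕ} (hm : m ≤ n) (hb : 1 ≤ b) :
    (m.choose b : ℝ) ≤ (3 * (n : ℝ) / b) ^ b := by
  have hbR : (0 : ℝ) < b := by exact_mod_cast hb
  have hfac : (0 : ℝ) < (Nat.factorial b : ℝ) := by exact_mod_cast Nat.factorial_pos b
  have h1 : (m.choose b : ℝ) ≤ (m : ℝ) ^ b / (Nat.factorial b : ℝ) :=
    Nat.choose_le_pow_div b m
  have h2 : (m : ℝ) ^ b ≤ (n : ℝ) ^ b :=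
    pow_le_pow_left₀ (by positivity) (by exact_mod_cast hm) b
  have key : (n : ℝ) ^ b / (Nat.factorial b : ℝ) ≤ (3 * (n : ℝ) / b) ^ b := by
    rw [div_le_iff₀ hfac]
    have h3 : ((b : ℝ)) ^ b ≤ 3 ^ b * (Nat.factorial b : ℝ) :=
      pow_self_le_three_pow_mul_factorial b
    have hexp : (3 * (n:ℝ)/b)^b * (b:ℝ)^b = 3^b * (n:ℝ)^b := by
      rw [← mul_pow, ← mul_pow]
      congr 1
      field_simp
    have h4 := mul_le_mul_of_nonneg_left h3
      (pow_nonneg (by positivity : (0:ℝ) ≤ 3 * (n:ℝ)/b) b)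
    rw [hexp] at h4
    have h5 : (3:ℝ)^b * ((n:ℝ)^b) ≤ (3:ℝ)^b * ((3 * (n:ℝ)/b)^b * (Nat.factorial b : ℝ)) := by
      nlinarith [h4]
    exact le_of_mul_le_mul_left h5 (by positivity)
  calc (m.choose b : ℝ) ≤ (m : ℝ) ^ b / (Nat.factorial b : ℝ) := h1
    _ ≤ (n : ℝ) ^ b / (Nat.factorial b : ℝ) := by gcongr
    _ ≤ _ := key

set_option maxHeartbeats 1000000 in
lemma key_arith (n k r a b : ℕ) (hn : 2 ≤ n) (hk : k ≤ n) (hr : 1 ≤ r)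
    (hab : a + b = k) (hbm : b ≤ n - k)
    (hV : (1000 * (r:ℝ))^(10*r) * n * ((n:ℝ)/k)^4 < (a:ℝ)^(4*r) * b) :
    (k.choose a : ℝ) * ((n-k).choose b : ℝ) * (1/2:ℝ)^(a*b) ≤ 1/(100*((k:ℝ)+1)) := by
  -- basic positivity
  have hnR : (2:ℝ) ≤ n := by exact_mod_cast hn
  have hk1 : 1 ≤ k := by
    rcases Nat.eq_zero_or_pos k with h0 | h; swap; · exact h
    subst h0
    have ha0 : a = 0 := by omega
    have hb0 : b = 0 := by omega
    rw [ha0, hb0] at hV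
    norm_num at hV
  have hkR : (1:ℝ) ≤ k := by exact_mod_cast hk1
  have hb1 : 1 ≤ b := by
    rcases Nat.eq_zero_or_pos b with h0 | h; swap; · exact h
    rw [h0] at hV
    have : (0:ℝ) ≤ (1000 * (r:ℝ))^(10*r) * n * ((n:ℝ)/k)^4 := by positivity
    norm_num at hV
    linarith
  have ha1 : 1 ≤ a := by
    rcases Nat.eq_zero_or_pos a with h0 | h; swap; · exact h
    rw [h0] at hV
    have h4r : 4*r ≠ 0 := by omega
    rw [Nat.cast_zero, zero_pow h4r, zero_mul] at hV
    have : (0:ℝ) ≤ (1000 * (r:ℝ))^(10*r) * n * ((n:ℝ)/k)^4 := by positivity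
    linarith
  have hbR : (1:ℝ) ≤ b := by exact_mod_cast hb1
  have haR : (1:ℝ) ≤ a := by exact_mod_cast ha1
  have hrR : (1:ℝ) ≤ r := by exact_mod_cast hr
  have hbn : (b:ℝ) ≤ n := by
    have : b ≤ n := le_trans hbm (Nat.sub_le n k)
    exact_mod_cast this
  set s : ℝ := (n:ℝ)/b with hs_def
  have hs1 : (1:ℝ) ≤ s := (one_le_div (by linarith)).mpr hbn
  set RR : ℝ := 1000 * r with hRR_def
  have hRR : (1000:ℝ) ≤ RR := by nlinarith
  have hRRpos : (0:ℝ) < RR := by linarith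
  clear_value s RR
  -- step 1: RR^(10r) * s < a^(4r)
  have hnk1 : (1:ℝ) ≤ (n:ℝ)/k := (one_le_div (by linarith)).mpr (by exact_mod_cast hk)
  have h1 : RR^(10*r) * s < (a:ℝ)^(4*r) := by
    have hX : (0:ℝ) ≤ RR^(10*r) * n := by positivity
    have hXn : RR^(10*r) * n ≤ RR^(10*r) * n * ((n:ℝ)/k)^4 :=
      le_mul_of_one_le_right hX (one_le_pow₀ hnk1)
    have h2 : RR^(10*r) * n < (a:ℝ)^(4*r) * b := lt_of_le_of_lt hXn hV
    rw [hs_def, mul_div_assoc'] -- RR^(10r) * (n/b) = (RR^(10r)*n)/b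
    rw [div_lt_iff₀ (by linarith : (0:ℝ) < b)]
    exact h2
  -- step 2: logs
  have hlog : (10*r : ℝ) * Real.log RR + Real.log s < (4*r : ℝ) * Real.log (a:ℝ) := by
    have hpos : (0:ℝ) < RR^(10*r) * s := by positivity
    have := Real.log_lt_log hpos h1
    rw [Real.log_mul (by positivity) (by linarith), Real.log_pow, Real.log_pow] at this
    push_cast at this
    linarith
  have hrpos : (0:ℝ) < (r:ℝ) := by linarith
  have h4r : (0:ℝ) < 4*(r:ℝ) := by linarith
  have hlogA : (5/2) * Real.log RR + Real.log s / (4*(r:ℝ)) < Real.log (a:ℝ) := by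
    rw [show (5/2) * Real.log RR + Real.log s / (4*(r:ℝ))
        = ((10*(r:ℝ)) * Real.log RR + Real.log s) / (4*(r:ℝ)) by field_simp; ring]
    rw [div_lt_iff₀ h4r]
    nlinarith [hlog]
  -- step 3: a ≥ 10^5 (1 + log s)
  have hA5 : 100000 * (1 + Real.log s) ≤ (a:ℝ) := by
    have hexpa : Real.exp ((5/2) * Real.log RR + Real.log s / (4*(r:ℝ))) ≤ (a:ℝ) := by
      have h := Real.exp_lt_exp.mpr hlogA
      rw [Real.exp_log (by linarith : (0:ℝ) < (a:ℝ))] at h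
      exact h.le
    have hsplit : (5/2) * Real.log RR + Real.log s / (4*(r:ℝ))
        = (Real.log RR + Real.log RR) + ((1/2) * Real.log RR + Real.log s / (4*(r:ℝ))) := by
      ring
    rw [hsplit, Real.exp_add, Real.exp_add, Real.exp_log hRRpos] at hexpa
    have hlRR : (0:ℝ) ≤ Real.log RR := Real.log_nonneg (by linarith)
    have hlogs : (0:ℝ) ≤ Real.log s := Real.log_nonneg hs1
    have he1 : Real.exp (Real.log s / (4*(r:ℝ)))
        ≤ Real.exp ((1/2) * Real.log RR + Real.log s / (4*(r:ℝ))) := by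
      apply Real.exp_le_exp.mpr; nlinarith
    have he2 : 1 + Real.log s / (4*(r:ℝ)) ≤ Real.exp (Real.log s / (4*(r:ℝ))) := by
      have := Real.add_one_le_exp (Real.log s / (4*(r:ℝ))); linarith
    have hmain : RR * RR * (1 + Real.log s / (4*(r:ℝ))) ≤ (a:ℝ) := by
      calc RR * RR * (1 + Real.log s / (4*(r:ℝ)))
          ≤ RR * RR * Real.exp ((1/2) * Real.log RR + Real.log s / (4*(r:ℝ))) := by
            have : (0:ℝ) ≤ RR * RR := by positivity
            exact mul_le_mul_of_nonneg_left (he2.trans he1) this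
        _ ≤ (a:ℝ) := hexpa
    have heq : RR * RR * (1 + Real.log s / (4*(r:ℝ)))
        = 1000000 * (r:ℝ)^2 + 250000 * (r:ℝ) * Real.log s := by
      rw [hRR_def]; field_simp; ring
    rw [heq] at hmain
    nlinarith [sq_nonneg ((r:ℝ) - 1), mul_le_mul_of_nonneg_left hrR hlogs]
  -- step 4: choose bounds
  have hcb : (k.choose a : ℝ) = (k.choose b : ℝ) := by
    have hak : a ≤ k := by omega
    have : k - a = b := by omega
    rw [← Nat.choose_symm hak, this]
  have hCk : (k.choose b : ℝ) ≤ (3 * (n:ℝ) / b) ^ b := choose_le_aux hk hb1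
  have hCm : ((n-k).choose b : ℝ) ≤ (3 * (n:ℝ) / b) ^ b :=
    choose_le_aux (Nat.sub_le n k) hb1
  have h3s : 3 * (n:ℝ) / b = 3 * s := by rw [hs_def]; ring
  rw [h3s] at hCk hCm
  have hs_pos : (0:ℝ) < s := by linarith
  have h3s_pos : (0:ℝ) < 3 * s := by linarith
  -- step 5: final log inequality
  have hfinal : 100*((k:ℝ)+1) * ((3*s)^b * (3*s)^b) ≤ 2^(a*b) := by
    have hX : (0:ℝ) < 100*((k:ℝ)+1) * ((3*s)^b * (3*s)^b) := by positivity
    have hY : (0:ℝ) < (2:ℝ)^(a*b) := by positivity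
    rw [← Real.exp_log hX, ← Real.exp_log hY]
    apply Real.exp_le_exp.mpr
    have l1 : Real.log ((3*s)^b) = (b:ℝ) * Real.log (3*s) := by rw [Real.log_pow]
    have l2 : Real.log ((2:ℝ)^(a*b)) = ((a*b : ℕ):ℝ) * Real.log 2 := by rw [Real.log_pow]
    have hne1 : ((3*s)^b * (3*s)^b : ℝ) ≠ 0 := by positivity
    have hne2 : ((3*s)^b : ℝ) ≠ 0 := by positivity
    have hne3 : ((k:ℝ)+1) ≠ 0 := by positivity
    have l3 : Real.log (100*((k:ℝ)+1) * ((3*s)^b * (3*s)^b))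
        = Real.log 100 + Real.log ((k:ℝ)+1) + ((b:ℝ) * Real.log (3*s) + (b:ℝ) * Real.log (3*s)) := by
      rw [Real.log_mul (by positivity) hne1, Real.log_mul (by norm_num) hne3,
        Real.log_mul hne2 hne2, l1]
    rw [l3, l2]
    have l4 : Real.log (3*s) = Real.log 3 + Real.log s :=
      Real.log_mul (by norm_num) (by positivity)
    rw [l4]
    clear hV h1 hlog hlogA hcb hCk hCm hX hY l1 l2 l3 l4 hne1 hne2 hne3 h3s hab hbm
    have hlog2 : (0.6931:ℝ) ≤ Real.log 2 := by
      have := Real.log_two_gt_d9; linarith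
    have hlog3 : Real.log 3 ≤ 2 := by
      have := Real.log_le_sub_one_of_pos (by norm_num : (0:ℝ) < 3); linarith
    have hlog100 : Real.log 100 ≤ 99 := by
      have := Real.log_le_sub_one_of_pos (by norm_num : (0:ℝ) < 100); linarith
    have hlogn : (0:ℝ) ≤ Real.log n := Real.log_nonneg (by linarith)
    have hlogs : (0:ℝ) ≤ Real.log s := Real.log_nonneg hs1
    have hlogk : Real.log ((k:ℝ)+1) ≤ 2 * Real.log n := by
      have hknR : (k:ℝ) ≤ (n:ℝ) := by exact_mod_cast hk
      have h1 : ((k:ℝ)+1) ≤ (n:ℝ)^2 := by nlinarith [sq_nonneg ((n:ℝ)-1)]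
      have h2 := Real.log_le_log (by linarith) h1
      rwa [Real.log_pow] at h2
      done
    have hb2 : 1 + Real.log n / 2 ≤ (b:ℝ) * (1 + Real.log s) := by
      by_cases hc : Real.log n / 2 ≤ Real.log s
      · have : (1:ℝ) * (1 + Real.log s) ≤ (b:ℝ) * (1 + Real.log s) :=
          mul_le_mul_of_nonneg_right hbR (by linarith)
        linarith
      · push_neg at hc
        have hlogb : Real.log (b:ℝ) = Real.log n - Real.log s := by
          rw [hs_def, Real.log_div (by linarith) (by linarith)]
          ring
        have hbe : 1 + Real.log n / 2 ≤ (b:ℝ) := by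
          have h1 : Real.log n / 2 < Real.log (b:ℝ) := by rw [hlogb]; linarith
          have h2 := Real.add_one_le_exp (Real.log n / 2)
          have h3 : Real.exp (Real.log n / 2) ≤ Real.exp (Real.log (b:ℝ)) :=
            Real.exp_le_exp.mpr h1.le
          rw [Real.exp_log (by linarith : (0:ℝ) < (b:ℝ))] at h3
          linarith
        nlinarith
    push_cast
    have hbls : (0:ℝ) ≤ (b:ℝ) * Real.log s := mul_nonneg (by linarith) hlogs
    have t1 : (b:ℝ)*(Real.log 3 + Real.log s) ≤ (b:ℝ)*(2 + Real.log s) :=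
      mul_le_mul_of_nonneg_left (by linarith) (by linarith)
    have t2 : 69310 * ((b:ℝ) * (1+Real.log s)) ≤ (a:ℝ)*(b:ℝ)*Real.log 2 := by
      have u1 : 100000*(1+Real.log s) * ((b:ℝ)*(0.6931:ℝ)) ≤ (a:ℝ) * ((b:ℝ)*Real.log 2) :=
        mul_le_mul hA5 (mul_le_mul_of_nonneg_left hlog2 (by linarith)) (by positivity)
          (by linarith)
      calc 69310*((b:ℝ)*(1+Real.log s)) = 100000*(1+Real.log s)*((b:ℝ)*(0.6931:ℝ)) := by ring
        _ ≤ (a:ℝ)*((b:ℝ)*Real.log 2) := u1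
        _ = (a:ℝ)*(b:ℝ)*Real.log 2 := by ring
    have t3 : (b:ℝ)*(2+Real.log s) ≤ 2*((b:ℝ)*(1+Real.log s)) := by nlinarith
    linarith [t1, t2, t3, hb2, hlog100, hlogk, hlogn, hbls]
  -- conclude
  have hL : (k.choose a : ℝ) * ((n-k).choose b : ℝ) * (1/2:ℝ)^(a*b)
      ≤ (3*s)^b * (3*s)^b * (1/2:ℝ)^(a*b) := by
    rw [hcb]
    have hhalf : (0:ℝ) ≤ (1/2:ℝ)^(a*b) := by positivity
    apply mul_le_mul_of_nonneg_right _ hhalf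
    exact mul_le_mul hCk hCm (by positivity) (by positivity)
  refine hL.trans ?_
  rw [div_pow, one_pow, mul_one_div, div_le_div_iff₀ (by positivity) (by positivity)]
  calc (3*s)^b * (3*s)^b * (100*((k:ℝ)+1)) = 100*((k:ℝ)+1) * ((3*s)^b * (3*s)^b) := by ring
    _ ≤ 2^(a*b) := hfinal
    _ = 1 * 2^(a*b) := by ring

lemma bernoulli_true : (PMF.bernoulli (1/2 : ENNReal).toNNReal (by simpa using ENNReal.toNNReal_mono ENNReal.one_ne_top (by norm_num : (1/2:ENNReal) ≤ 1))).toMeasure {true} = 1/2 := by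
  rw [PMF.toMeasure_apply_singleton _ _ (measurableSet_singleton true)]
  rw [PMF.bernoulli_apply, cond_true, ENNReal.coe_toNNReal (by norm_num)]

instance bipartiteER_prob (k m : ℕ) :
    IsProbabilityMeasure (bipartiteER k m (1/2) (by norm_num)) := by
  unfold bipartiteER
  infer_instance

lemma cylinder_measure {k m : ℕ} (L : Finset (Fin k)) (R : Finset (Fin m)) :
    bipartiteER k m (1/2) (by norm_num) {H | IsBiclique H L R}
      = (1/2 : ENNReal) ^ (L.card * R.card) := by
  have hset : {H : Fin k × Fin m → Bool | IsBiclique H L R}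
      = Set.pi Set.univ (fun q => if q.1 ∈ L ∧ q.2 ∈ R then {true} else Set.univ) := by
    ext H
    simp only [Set.mem_setOf_eq, Set.mem_pi, Set.mem_univ, forall_true_left, IsBiclique]
    constructor
    · intro h q
      split_ifs with hq
      · exact h q.1 hq.1 q.2 hq.2
      · trivial
    · intro h u hu v hv
      have := h (u, v)
      rw [if_pos ⟨hu, hv⟩] at this
      exact this
  rw [hset]
  unfold bipartiteER
  rw [Measure.pi_pi]
  have : ∀ q : Fin k × Fin m,
      (PMF.bernoulli (1/2 : ENNReal).toNNReal (by simpa using ENNReal.toNNReal_mono ENNReal.one_ne_top (by norm_num : (1/2:ENNReal) ≤ 1))).toMeasure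
        (if q.1 ∈ L ∧ q.2 ∈ R then ({true} : Set Bool) else Set.univ)
      = if q.1 ∈ L ∧ q.2 ∈ R then (1/2 : ENNReal) else 1 := by
    intro q
    split_ifs
    · exact bernoulli_true
    · exact measure_univ
  rw [Finset.prod_congr rfl fun q _ => this q]
  rw [Finset.prod_ite, Finset.prod_const, Finset.prod_const, one_pow, mul_one]
  congr 1
  have : Finset.univ.filter (fun q : Fin k × Fin m => q.1 ∈ L ∧ q.2 ∈ R) = L ×ˢ R := by
    ext q
    simp [Finset.mem_product]
  rw [this, Finset.card_product]

end Aux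

/-- There is a constant `c > 0` such that for all `n ≥ 2`, `k ≤ n` and
`1 ≤ r ≤ c·k²/(n·log n)`, with probability at least `0.99` over `H ∼ B(k, n−k, 1/2)`,
every biclique `(L, R)` of `H` with `|L| + |R| = k` satisfies
`|L|^{4r}·|R| ≤ (1000r)^{10r}·n·(n/k)⁴`. -/
theorem stmt_12 : ∃ c : ℝ, 0 < c ∧ ∀ n k r : ℕ, 2 ≤ n → k ≤ n → 1 ≤ r →
    (r : ℝ) ≤ c * (k : ℝ) ^ 2 / ((n : ℝ) * Real.log n) →
    ENNReal.ofReal 0.99 ≤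
      bipartiteER k (n - k) (1/2) (by norm_num)
        {H | ∀ (L : Finset (Fin k)) (R : Finset (Fin (n - k))),
          IsBiclique H L R → L.card + R.card = k →
          (L.card : ℝ) ^ (4 * r) * R.card
            ≤ (1000 * (r : ℝ)) ^ (10 * r) * n * ((n : ℝ) / k) ^ 4} := by
  refine ⟨1, one_pos, fun n k r hn hk hr _ => ?_⟩
  set μ := bipartiteER k (n - k) (1/2) (by norm_num) with hμ
  haveI : IsProbabilityMeasure μ := bipartiteER_prob k (n-k)
  set E : Set (Fin k × Fin (n-k) → Bool) :=
    {H | ∀ (L : Finset (Fin k)) (R : Finset (Fin (n - k))),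
          IsBiclique H L R → L.card + R.card = k →
          (L.card : ℝ) ^ (4 * r) * R.card
            ≤ (1000 * (r : ℝ)) ^ (10 * r) * n * ((n : ℝ) / k) ^ 4} with hE
  -- the bad pairs
  set bad : Finset (Finset (Fin k) × Finset (Fin (n-k))) :=
    Finset.univ.filter (fun p => p.1.card + p.2.card = k ∧
      ¬((p.1.card : ℝ) ^ (4 * r) * p.2.card
          ≤ (1000 * (r : ℝ)) ^ (10 * r) * n * ((n : ℝ) / k) ^ 4)) with hbad
  have hsub : Eᶜ ⊆ ⋃ p ∈ bad, {H | IsBiclique H p.1 p.2} := by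
    intro H hH
    simp only [hE, Set.mem_compl_iff, Set.mem_setOf_eq] at hH
    push_neg at hH
    obtain ⟨L, R, hbic, hcard, hineq⟩ := hH
    have hmem : (L, R) ∈ bad := by
      simp only [hbad, Finset.mem_filter, Finset.mem_univ, true_and]
      exact ⟨hcard, not_le.mpr hineq⟩
    simp only [Set.mem_iUnion, Set.mem_setOf_eq, exists_prop]
    exact ⟨(L, R), hmem, hbic⟩
  have hbound : μ Eᶜ ≤ ∑ p ∈ bad, (1/2 : ENNReal) ^ (p.1.card * p.2.card) := by
    calc μ Eᶜ ≤ μ (⋃ p ∈ bad, {H | IsBiclique H p.1 p.2}) := measure_mono hsub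
      _ ≤ ∑ p ∈ bad, μ {H | IsBiclique H p.1 p.2} := measure_biUnion_finset_le _ _
      _ = ∑ p ∈ bad, (1/2 : ENNReal) ^ (p.1.card * p.2.card) := by
          exact Finset.sum_congr rfl fun p _ => cylinder_measure p.1 p.2
  -- fiberwise bound
  have hsum : ∑ p ∈ bad, (1/2 : ENNReal) ^ (p.1.card * p.2.card)
      ≤ ENNReal.ofReal (1/100) := by
    have hmaps : ∀ p ∈ bad, p.1.card ∈ Finset.range (k+1) := by
      intro p hp
      simp only [hbad, Finset.mem_filter] at hp
      simp only [Finset.mem_range]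
      omega
    rw [← Finset.sum_fiberwise_of_maps_to hmaps]
    have hfiber : ∀ i ∈ Finset.range (k+1),
        ∑ p ∈ bad.filter (fun p => p.1.card = i), (1/2 : ENNReal) ^ (p.1.card * p.2.card)
        ≤ ENNReal.ofReal (1/(100*((k:ℝ)+1))) := by
      intro i _
      rcases Finset.eq_empty_or_nonempty (bad.filter (fun p => p.1.card = i)) with he | hne
      · rw [he, Finset.sum_empty]; exact zero_le
      · obtain ⟨p0, hp0⟩ := hne
        simp only [Finset.mem_filter, hbad, Finset.mem_univ, true_and] at hp0
        obtain ⟨⟨hcard0, hviol0⟩, hi0⟩ := hp0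
        set j := k - i with hj
        have hij : i + j = k := by omega
        have hj0 : p0.2.card = j := by omega
        have hjm : j ≤ n - k := by
          have := Finset.card_le_univ p0.2
          simp only [Finset.card_univ, Fintype.card_fin] at this
          omega
        -- all terms in fiber are equal
        have hterm : ∀ p ∈ bad.filter (fun p => p.1.card = i),
            (1/2 : ENNReal) ^ (p.1.card * p.2.card) = (1/2 : ENNReal) ^ (i * j) := by
          intro p hp
          simp only [Finset.mem_filter, hbad, Finset.mem_univ, true_and] at hp
          obtain ⟨⟨hc, _⟩, hic⟩ := hp
          have : p.2.card = j := by omega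
          rw [hic, this]
        rw [Finset.sum_congr rfl hterm, Finset.sum_const, nsmul_eq_mul]
        -- count the fiber
        have hcount : (bad.filter (fun p => p.1.card = i)).card ≤ k.choose i * (n-k).choose j := by
          have hss : bad.filter (fun p => p.1.card = i)
              ⊆ (Finset.univ.powersetCard i) ×ˢ (Finset.univ.powersetCard j) := by
            intro p hp
            simp only [Finset.mem_filter, hbad, Finset.mem_univ, true_and] at hp
            obtain ⟨⟨hc, _⟩, hic⟩ := hp
            simp only [Finset.mem_product, Finset.mem_powersetCard_univ]
            exact ⟨hic, by omega⟩
          calc (bad.filter (fun p => p.1.card = i)).card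
              ≤ _ := Finset.card_le_card hss
            _ = k.choose i * (n-k).choose j := by
                rw [Finset.card_product, Finset.card_powersetCard, Finset.card_powersetCard,
                  Finset.card_univ, Finset.card_univ, Fintype.card_fin, Fintype.card_fin]
        -- the violation for (i, j), in ℝ
        have hviol : (1000 * (r:ℝ))^(10*r) * n * ((n:ℝ)/k)^4 < (i:ℝ)^(4*r) * j := by
          rw [← hi0, ← hj0]
          exact not_le.mp hviol0
        have hreal := key_arith n k r i j hn hk hr hij hjm hviol
        -- convert to ENNReal
        have hconv : ((bad.filter (fun p => p.1.card = i)).card : ENNReal) * (1/2)^(i*j)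
            ≤ ENNReal.ofReal (1/(100*((k:ℝ)+1))) := by
          have h2 : (1/2 : ENNReal)^(i*j) = ENNReal.ofReal ((1/2 : ℝ)^(i*j)) := by
            rw [ENNReal.ofReal_pow (by norm_num)]
            congr 1
            rw [ENNReal.ofReal_div_of_pos (by norm_num)]
            norm_num
          have h3 : ((bad.filter (fun p => p.1.card = i)).card : ENNReal)
              ≤ ((k.choose i * (n-k).choose j : ℕ) : ENNReal) := by
            exact_mod_cast hcount
          calc ((bad.filter (fun p => p.1.card = i)).card : ENNReal) * (1/2)^(i*j)
              ≤ ((k.choose i * (n-k).choose j : ℕ) : ENNReal) * (1/2)^(i*j) :=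
                mul_le_mul_left h3 _
            _ = ENNReal.ofReal ((k.choose i * (n-k).choose j : ℕ) * (1/2:ℝ)^(i*j)) := by
                rw [ENNReal.ofReal_mul (by positivity), h2, ENNReal.ofReal_natCast]
            _ ≤ ENNReal.ofReal (1/(100*((k:ℝ)+1))) := by
                apply ENNReal.ofReal_le_ofReal
                push_cast
                exact hreal
        exact hconv
    refine le_trans (Finset.sum_le_sum hfiber) ?_
    calc ∑ _i ∈ Finset.range (k+1), ENNReal.ofReal (1/(100*((k:ℝ)+1)))
        = (k+1) * ENNReal.ofReal (1/(100*((k:ℝ)+1))) := by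
          rw [Finset.sum_const, Finset.card_range, nsmul_eq_mul]
          push_cast
          ring
      _ = ENNReal.ofReal ((k+1) * (1/(100*((k:ℝ)+1)))) := by
          rw [ENNReal.ofReal_mul (by positivity)]
          congr 1
          rw [ENNReal.ofReal_add (by positivity) (by norm_num), ENNReal.ofReal_natCast,
            ENNReal.ofReal_one]
      _ = ENNReal.ofReal (1/100) := by
          congr 1
          field_simp
      _ ≤ ENNReal.ofReal (1/100) := le_refl _
  -- conclude
  have hcompl : μ Eᶜ ≤ ENNReal.ofReal (1/100) := hbound.trans hsum
  have hunion : (1 : ENNReal) ≤ μ E + μ Eᶜ := by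
    have h1 : μ (E ∪ Eᶜ) ≤ μ E + μ Eᶜ := measure_union_le E Eᶜ
    rw [Set.union_compl_self, measure_univ] at h1
    exact h1
  have h99 : ENNReal.ofReal 0.99 = 1 - ENNReal.ofReal (1/100) := by
    rw [← ENNReal.ofReal_one, ← ENNReal.ofReal_sub _ (by norm_num : (0:ℝ) ≤ 1/100)]
    norm_num
  rw [h99]
  rw [tsub_le_iff_right]
  calc (1 : ENNReal) ≤ μ E + μ Eᶜ := hunion
    _ ≤ μ E + ENNReal.ofReal (1/100) := add_le_add_right hcompl _
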